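/- A valuation domain of Krull dimension at most 1 is archimedean: for all nonzero a, b in the Jacobson radical, there exists k ∈ ℕ with b dividing a^k. -/
import Mathlib

/-- A valuation domain of Krull dimension at most 1 is archimedean: for all nonzero
`a`, `b` in the Jacobson radical there is `k` with `b ∣ a ^ k`. -/
theorem valuation_domain_dim_le_one_archimedean (V : Type*) [CommRing V] [IsDomain V]
    (hval : ∀ a b : V, a ∣ b ∨ b ∣ a)
    (hdim : ∀ a b : V, ∃ (k l : ℕ) (x y : V), b ^ l * (a ^ k * (a * x - 1) + b * y) = 0) :
    ∀ a b : V, a ∈ Ideal.jacobson (⊥ : Ideal V) → b ∈ Ideal.jacobson (⊥ : Ideal V) →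
      a ≠ 0 → b ≠ 0 → ∃ k : ℕ, b ∣ a ^ k := by
  intro a b ha hb ha0 hb0
  obtain ⟨k, l, x, y, h⟩ := hdim a b
  have hbl : (b : V) ^ l ≠ 0 := pow_ne_zero _ hb0
  have h0 : a ^ k * (a * x - 1) + b * y = 0 := by
    rcases mul_eq_zero.1 h with h' | h'
    · exact absurd h' hbl
    · exact h'
  have hdvd : b ∣ a ^ k * (a * x - 1) := ⟨-y, by linear_combination h0⟩
  have hu : IsUnit (a * x - 1) := by
    have := (Ideal.mem_jacobson_bot.1 ha) (-x)
    have h1 : a * -x + 1 = -(a * x - 1) := by ring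
    rw [h1] at this
    exact (IsUnit.neg_iff _).1 this
  exact ⟨k, (hu.dvd_mul_right).1 hdvd⟩
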